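/- Fix integers k ≥ 1, m ≥ 1 and 1 ≤ i' ≤ k. Let t = (m+1, i' − 1/2, 1) ∈ ℝ³. For all 1 ≤ i ≤ k and 1 ≤ j ≤ m, the point t dominates p_{i,j} = (j, i, −(k+2)j − i) coordinatewise if and only if i < i'; and t does not dominate any point b_j = (j, k+1, −(k+2)j + 1). -/
import Mathlib


/-- `Dominates p q` means that `q` dominates `p` coordinatewise in `ℝ³`. -/
def Dominates (p q : ℝ × ℝ × ℝ) : Prop :=
  p.1 ≤ q.1 ∧ p.2.1 ≤ q.2.1 ∧ p.2.2 ≤ q.2.2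

theorem query_point_domination (k m i' : ℤ) (hk : 1 ≤ k) (hm : 1 ≤ m)
    (hi'1 : 1 ≤ i') (hi'k : i' ≤ k) :
    ∀ i j : ℤ, 1 ≤ i → i ≤ k → 1 ≤ j → j ≤ m →
      ((Dominates ((j:ℝ), (i:ℝ), -((k:ℝ)+2)*(j:ℝ) - (i:ℝ))
          ((m:ℝ)+1, (i':ℝ) - 1/2, 1) ↔ i < i') ∧
       ¬ Dominates ((j:ℝ), (k:ℝ)+1, -((k:ℝ)+2)*(j:ℝ) + 1)
          ((m:ℝ)+1, (i':ℝ) - 1/2, 1)) := by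
  intro i j hi1 hik hj1 hjm
  have hjR : (1:ℝ) ≤ (j:ℝ) := by exact_mod_cast hj1
  have hiR : (1:ℝ) ≤ (i:ℝ) := by exact_mod_cast hi1
  have hkR : (1:ℝ) ≤ (k:ℝ) := by exact_mod_cast hk
  have hjmR : (j:ℝ) ≤ (m:ℝ) := by exact_mod_cast hjm
  have hik' : (i':ℝ) ≤ (k:ℝ) := by exact_mod_cast hi'k
  constructor
  · unfold Dominates
    simp only
    constructor
    · rintro ⟨-, h2, -⟩
      have : (i:ℝ) < (i':ℝ) := by linarith
      exact_mod_cast this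
    · intro hlt
      have hle : i + 1 ≤ i' := hlt
      have : (i:ℝ) + 1 ≤ (i':ℝ) := by exact_mod_cast hle
      refine ⟨by linarith, by linarith, ?_⟩
      nlinarith
  · rintro ⟨-, h2, -⟩
    simp only at h2
    linarith
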